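/- Let r ≥ 2, let n_1, ..., n_r be natural numbers, let q_2, ..., q_r be negative reals and σ_2, ..., σ_r be positive reals, and define Ψ(x) = (2n_1 + 2 - x) · x^{n_1} · ∏_{i=2}^{r} ((-q_i)(x + σ_i))^{n_i} and v(x) = x^{n_1} · ∏_{i=2}^{r} ((-q_i)(x + σ_i))^{n_i}. Suppose κ_1 > 0 satisfies ∫_0^∞ e^{-κ_1 x} Ψ(x) dx = 0, and define, for s > 0, α(s) = e^{κ_1 s} · v(s)^{-1} · ∫_0^s e^{-κ_1 x} Ψ(x) dx. Then α(s) > 0 for every s > 0, and α(s)/s tends to 1/κ_1 as s → +∞. -/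

import Mathlib

open MeasureTheory Set Filter Polynomial

lemma aux_poly_div_exp (Q : ℝ[X]) {c : ℝ} (hc : 0 < c) :
    Tendsto (fun x => Q.eval x / Real.exp (c * x)) atTop (nhds 0) := by
  have h1 := (Q.comp (Polynomial.C c⁻¹ * Polynomial.X)).tendsto_div_exp_atTop
  have h2 : Tendsto (fun x : ℝ => c * x) atTop atTop :=
    Tendsto.const_mul_atTop hc tendsto_id
  exact (h1.comp h2).congr fun x => by
    simp [Function.comp, Polynomial.eval_comp, inv_mul_cancel_left₀ hc.ne']

lemma aux_integrableOn (Q : ℝ[X]) {b : ℝ} (hb : 0 < b) (a : ℝ) :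
    IntegrableOn (fun x => Real.exp (-b * x) * Q.eval x) (Ioi a) := by
  apply integrable_of_isBigO_exp_neg (half_pos hb) (f := fun x => Real.exp (-b * x) * Q.eval x)
    (b := b / 2)
  · exact ((Real.continuous_exp.comp (continuous_const.mul continuous_id)).mul
      Q.continuous).continuousOn
  · apply Asymptotics.IsLittleO.isBigO
    rw [Asymptotics.isLittleO_iff_tendsto fun x h => absurd h (Real.exp_ne_zero _)]
    refine (aux_poly_div_exp Q (half_pos hb)).congr fun x => ?_
    rw [eq_comm, div_eq_div_iff (Real.exp_ne_zero _) (Real.exp_ne_zero _)]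
    rw [mul_comm (Real.exp (-b * x)) (Q.eval x), mul_assoc, ← Real.exp_add]
    congr 1
    ring

lemma aux_moment {b : ℝ} (hb : 0 < b) (k : ℕ) :
    ∫ t in Ioi (0:ℝ), Real.exp (-b * t) * t ^ k = k.factorial / b ^ (k + 1) := by
  have h := Real.integral_rpow_mul_exp_neg_mul_Ioi (a := (k : ℝ) + 1) (r := b)
    (by positivity) hb
  rw [show ((k:ℝ) + 1) - 1 = (k:ℝ) by ring] at h
  calc ∫ t in Ioi (0:ℝ), Real.exp (-b * t) * t ^ k
      = ∫ t in Ioi (0:ℝ), t ^ ((k:ℝ)) * Real.exp (-(b * t)) := by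
        refine setIntegral_congr_fun measurableSet_Ioi fun t _ => ?_
        rw [Real.rpow_natCast, neg_mul, mul_comm]
    _ = (1 / b) ^ ((k:ℝ) + 1) * Real.Gamma ((k:ℝ) + 1) := h
    _ = k.factorial / b ^ (k + 1) := by
        rw [show ((k:ℝ) + 1) = ((k + 1 : ℕ) : ℝ) by push_cast; ring, Real.rpow_natCast]
        rw [show ((k + 1 : ℕ) : ℝ) = (k:ℝ) + 1 by push_cast; ring, Real.Gamma_nat_eq_factorial]
        rw [one_div, inv_pow]
        ring

lemma aux_shift (f : ℝ → ℝ) (s : ℝ) :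
    ∫ x in Ioi s, f x = ∫ t in Ioi (0:ℝ), f (s + t) := by
  have h := (measurePreserving_add_left volume s).setIntegral_preimage_emb
    (MeasurableEquiv.addLeft s).measurableEmbedding f (Ioi s)
  rw [← h]
  congr 1
  ext t
  simp

/-- Noncompact shrinking solitons (Theorem 3.8, analytic core): with
`Ψ(x) = (2n₁+2-x) v(x)`, `v(x) = x^{n₁} ∏ (-qᵢ(x+σᵢ))^{nᵢ}`, `κ₁ > 0` chosen so that
`∫_0^∞ e^{-κ₁x} Ψ(x) dx = 0`, the coefficient
`α(s) = e^{κ₁ s} v(s)⁻¹ ∫_0^s e^{-κ₁x} Ψ(x) dx` is positive on `(0,∞)` and satisfies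
`α(s)/s → 1/κ₁` as `s → +∞`. -/
theorem stmt_19 (r : ℕ) (hr : 2 ≤ r) (n : ℕ → ℕ) (q σ : ℕ → ℝ)
    (hq : ∀ i ∈ Finset.Icc 2 r, q i < 0)
    (hσ : ∀ i ∈ Finset.Icc 2 r, 0 < σ i)
    (Ψ v : ℝ → ℝ)
    (hΨ : ∀ x, Ψ x = (2 * (n 1 : ℝ) + 2 - x) * x ^ n 1 *
      ∏ i ∈ Finset.Icc 2 r, ((-q i) * (x + σ i)) ^ n i)
    (hv : ∀ x, v x = x ^ n 1 * ∏ i ∈ Finset.Icc 2 r, ((-q i) * (x + σ i)) ^ n i)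
    (κ1 : ℝ) (hκ1 : 0 < κ1)
    (hzero : (∫ x in Set.Ioi (0:ℝ), Real.exp (-κ1 * x) * Ψ x) = 0)
    (α : ℝ → ℝ)
    (hα : ∀ s, α s = Real.exp (κ1 * s) * (v s)⁻¹ *
      ∫ x in (0:ℝ)..s, Real.exp (-κ1 * x) * Ψ x) :
    (∀ s : ℝ, 0 < s → 0 < α s) ∧
      Filter.Tendsto (fun s => α s / s) Filter.atTop (nhds (1 / κ1)) := by
  set M : ℝ := 2 * (n 1 : ℝ) + 2 with hM
  set V : ℝ[X] := X ^ n 1 * ∏ i ∈ Finset.Icc 2 r, (C (-q i) * (X + C (σ i))) ^ n i with hV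
  set PQ : ℝ[X] := (X - C M) * V with hPQ
  set d : ℕ := PQ.natDegree with hd
  set R : ℝ[X] := (∑ i ∈ Finset.range d,
      C (((i+1).factorial : ℝ) / κ1 ^ (i+2)) * hasseDeriv (i+1) PQ) + C κ1⁻¹ * PQ with hR
  set g : ℝ → ℝ := fun x => Real.exp (-κ1 * x) * Ψ x with hgdef
  -- evaluation facts
  have hVe : ∀ x : ℝ, V.eval x = x ^ n 1 * ∏ i ∈ Finset.Icc 2 r, ((-q i) * (x + σ i)) ^ n i := by
    intro x; simp [hV, eval_prod]
  have hveq : ∀ x, v x = V.eval x := fun x => by rw [hv x, hVe x]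
  have hΨeq : ∀ x, Ψ x = -(PQ.eval x) := by
    intro x
    rw [hΨ x, hPQ]
    simp only [eval_mul, eval_sub, eval_X, eval_C, hVe x]
    ring
  have hgeq : ∀ x, g x = -(Real.exp (-κ1 * x) * PQ.eval x) := by
    intro x; rw [hgdef]; simp only []; rw [hΨeq x]; ring
  -- positivity of V
  have hVpos : ∀ x : ℝ, 0 < x → 0 < V.eval x := by
    intro x hx
    rw [hVe x]
    refine mul_pos (pow_pos hx _) (Finset.prod_pos fun i hi => pow_pos ?_ _)
    have := hq i hi; have := hσ i hi
    nlinarith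
  have hVlc : V.leadingCoeff = ∏ i ∈ Finset.Icc 2 r, (-q i) ^ n i := by
    simp [hV, leadingCoeff_mul, leadingCoeff_prod, leadingCoeff_pow,
      (monic_X_add_C _).leadingCoeff, leadingCoeff_X_pow, leadingCoeff_C]
  have hlcpos : 0 < V.leadingCoeff := by
    rw [hVlc]
    exact Finset.prod_pos fun i hi => pow_pos (by linarith [hq i hi]) _
  have hV0 : V ≠ 0 := fun h => by simp [h] at hlcpos
  have hPQ0 : PQ ≠ 0 := mul_ne_zero (X_sub_C_ne_zero M) hV0
  have hd1 : 1 ≤ d := by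
    rw [hd, hPQ, natDegree_mul (X_sub_C_ne_zero M) hV0, natDegree_X_sub_C]
    omega
  -- key integral identity
  have hG : ∀ s : ℝ, (∫ t in Ioi (0:ℝ), Real.exp (-κ1 * t) * PQ.eval (s + t)) = R.eval s := by
    intro s
    have hexp : ∀ t : ℝ, PQ.eval (s + t) =
        ∑ i ∈ Finset.range (d + 1), (taylor s PQ).coeff i * t ^ i := by
      intro t
      rw [show s + t = t + s from add_comm s t, ← Polynomial.taylor_eval s PQ t]
      rw [Polynomial.eval_eq_sum_range, natDegree_taylor, ← hd]
    calc (∫ t in Ioi (0:ℝ), Real.exp (-κ1 * t) * PQ.eval (s + t))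
        = ∫ t in Ioi (0:ℝ), ∑ i ∈ Finset.range (d + 1),
            (taylor s PQ).coeff i * (Real.exp (-κ1 * t) * t ^ i) := by
          refine setIntegral_congr_fun measurableSet_Ioi fun t _ => ?_
          rw [hexp t, Finset.mul_sum]
          exact Finset.sum_congr rfl fun i _ => by ring
      _ = ∑ i ∈ Finset.range (d + 1),
            (taylor s PQ).coeff i * ∫ t in Ioi (0:ℝ), Real.exp (-κ1 * t) * t ^ i := by
          rw [integral_finset_sum]
          · exact Finset.sum_congr rfl fun i _ => integral_const_mul _ _
          · intro i _
            have h := (aux_integrableOn (X ^ i : ℝ[X]) hκ1 0).const_mul ((taylor s PQ).coeff i)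
            simpa using h
      _ = ∑ i ∈ Finset.range (d + 1),
            (taylor s PQ).coeff i * ((i.factorial : ℝ) / κ1 ^ (i + 1)) :=
          Finset.sum_congr rfl fun i _ => by rw [aux_moment hκ1 i]
      _ = R.eval s := by
          rw [Finset.sum_range_succ', hR]
          simp only [eval_add, eval_mul, eval_C, eval_finset_sum]
          congr 1
          · exact Finset.sum_congr rfl fun i _ => by rw [taylor_coeff, mul_comm]
          · rw [taylor_coeff_zero]
            simp [Nat.factorial]
            ring
  -- exp(κ1 s) * F(s) = R.eval s for s > 0
  have hInt0 : IntegrableOn g (Ioi 0) := by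
    rw [funext hgeq]; exact (aux_integrableOn PQ hκ1 0).neg
  have hFG : ∀ s : ℝ, 0 < s →
      (∫ x in Ioi s, g x) = -(Real.exp (-(κ1 * s)) * R.eval s) := by
    intro s hs
    rw [aux_shift g s]
    calc ∫ t in Ioi (0:ℝ), g (s + t)
        = ∫ t in Ioi (0:ℝ), (-Real.exp (-κ1 * s)) * (Real.exp (-κ1 * t) * PQ.eval (s + t)) := by
          refine setIntegral_congr_fun measurableSet_Ioi fun t _ => ?_
          rw [hgeq (s + t), show -κ1 * (s + t) = -κ1 * s + -κ1 * t by ring, Real.exp_add]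
          ring
      _ = (-Real.exp (-κ1 * s)) * ∫ t in Ioi (0:ℝ), Real.exp (-κ1 * t) * PQ.eval (s + t) :=
          integral_const_mul _ _
      _ = -(Real.exp (-(κ1 * s)) * R.eval s) := by rw [hG s, show -κ1 * s = -(κ1 * s) from neg_mul κ1 s, neg_mul]
  have hsplit : ∀ s : ℝ, 0 < s →
      (∫ x in (0:ℝ)..s, g x) = -(∫ x in Ioi s, g x) := by
    intro s hs
    have hInts : IntegrableOn g (Ioi s) := by
      rw [funext hgeq]; exact (aux_integrableOn PQ hκ1 s).neg
    have hIntc : IntegrableOn g (Ioc 0 s) := hInt0.mono_set Ioc_subset_Ioi_self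
    have h := setIntegral_union (Ioc_disjoint_Ioi (le_refl s)) measurableSet_Ioi hIntc hInts
      (f := g) (μ := volume)
    rw [Ioc_union_Ioi_eq_Ioi hs.le] at h
    rw [intervalIntegral.integral_of_le hs.le]
    have h0 : (∫ x in Ioi (0:ℝ), g x) = 0 := hzero
    linarith [h, h0]
  have hkey : ∀ s : ℝ, 0 < s →
      Real.exp (κ1 * s) * (∫ x in (0:ℝ)..s, g x) = R.eval s := by
    intro s hs
    rw [hsplit s hs, hFG s hs, neg_neg, ← mul_assoc, ← Real.exp_add, add_neg_cancel,
      Real.exp_zero, one_mul]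
  constructor
  · -- positivity
    intro s hs
    have hvpos : 0 < v s := by rw [hveq s]; exact hVpos s hs
    have hF : 0 < ∫ x in (0:ℝ)..s, g x := by
      rcases le_or_gt s M with hsM | hMs
      · apply intervalIntegral.intervalIntegral_pos_of_pos_on
        · apply Continuous.intervalIntegrable
          rw [funext hgeq]
          exact ((Real.continuous_exp.comp (continuous_const.mul continuous_id)).mul
            PQ.continuous).neg
        · intro x hx
          rw [hgdef]
          simp only []
          rw [hΨ x]
          refine mul_pos (Real.exp_pos _) ?_
          refine mul_pos (mul_pos ?_ (pow_pos hx.1 _))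
            (Finset.prod_pos fun i hi => pow_pos ?_ _)
          · linarith [hx.2, hsM]
          · have := hq i hi; have := hσ i hi; nlinarith [hx.1]
        · exact hs
      · rw [hsplit s hs, ← integral_neg]
        have hposOn : ∀ x ∈ Ioi s, 0 < -g x := by
          intro x hx
          rw [hgeq x, neg_neg]
          have hx0 : 0 < x := hs.trans (mem_Ioi.mp hx)
          refine mul_pos (Real.exp_pos _) ?_
          rw [hPQ]
          simp only [eval_mul, eval_sub, eval_X, eval_C]
          exact mul_pos (by linarith [mem_Ioi.mp hx]) (hVpos x hx0)
        rw [setIntegral_pos_iff_support_of_nonneg_ae]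
        · have hsub : Ioi s ⊆ Function.support fun x => -g x :=
            fun x hx => ne_of_gt (hposOn x hx)
          rw [inter_eq_self_of_subset_right hsub, Real.volume_Ioi]
          simp
        · filter_upwards [self_mem_ae_restrict measurableSet_Ioi] with x hx
          exact (hposOn x hx).le
        · have hints : IntegrableOn g (Ioi s) := by
            rw [funext hgeq]; exact (aux_integrableOn PQ hκ1 s).neg
          exact hints.neg
    have := hα s
    rw [this]
    positivity
  · -- the limit
    have hSdeg : (∑ i ∈ Finset.range d,
        C (((i+1).factorial : ℝ) / κ1 ^ (i+2)) * hasseDeriv (i+1) PQ).degree < PQ.degree := by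
      refine lt_of_le_of_lt (Polynomial.degree_sum_le _ _) ?_
      rw [Finset.sup_lt_iff (by rw [bot_lt_iff_ne_bot, Ne, Polynomial.degree_eq_bot]; exact hPQ0)]
      intro i hi
      have h2 : (hasseDeriv (i+1) PQ).natDegree ≤ d - 1 :=
        le_trans (Polynomial.natDegree_hasseDeriv_le _ _) (by rw [← hd]; omega)
      calc (C (((i+1).factorial : ℝ) / κ1 ^ (i+2)) * hasseDeriv (i+1) PQ).degree
          ≤ (hasseDeriv (i+1) PQ).degree := by
            refine le_trans (degree_mul_le _ _) ?_
            refine le_trans (add_le_add degree_C_le le_rfl) ?_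
            simp
        _ ≤ ((hasseDeriv (i+1) PQ).natDegree : WithBot ℕ) := Polynomial.degree_le_natDegree
        _ ≤ ((d - 1 : ℕ) : WithBot ℕ) := by exact_mod_cast h2
        _ < (d : WithBot ℕ) := by exact_mod_cast (by omega : d - 1 < d)
        _ = PQ.degree := by rw [hd]; exact (Polynomial.degree_eq_natDegree hPQ0).symm
    have hCPQdeg : (C κ1⁻¹ * PQ).degree = PQ.degree :=
      Polynomial.degree_C_mul (inv_ne_zero hκ1.ne')
    have hRdeg : R.degree = PQ.degree := by
      rw [hR, Polynomial.degree_add_eq_right_of_degree_lt (by rwa [hCPQdeg]), hCPQdeg]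
    have hRlc : R.leadingCoeff = κ1⁻¹ * PQ.leadingCoeff := by
      rw [hR, Polynomial.leadingCoeff_add_of_degree_lt (by rwa [hCPQdeg]),
        leadingCoeff_mul, leadingCoeff_C]
    have hXVdeg : (X * V : ℝ[X]).degree = PQ.degree := by
      have h1 : (X * V : ℝ[X]).degree = 1 + V.degree := by rw [degree_mul, degree_X]
      have h2 : PQ.degree = 1 + V.degree := by rw [hPQ, degree_mul, degree_X_sub_C]
      rw [h1, h2]
    have hXVlc : (X * V : ℝ[X]).leadingCoeff = V.leadingCoeff := by
      rw [leadingCoeff_mul, leadingCoeff_X, one_mul]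
    have hPQlc : PQ.leadingCoeff = V.leadingCoeff := by
      rw [hPQ, leadingCoeff_mul, (monic_X_sub_C M).leadingCoeff, one_mul]
    have hlim := Polynomial.div_tendsto_leadingCoeff_div_of_degree_eq R (X * V)
      (hRdeg.trans hXVdeg.symm)
    have hval : R.leadingCoeff / (X * V : ℝ[X]).leadingCoeff = 1 / κ1 := by
      rw [hRlc, hXVlc, hPQlc]
      field_simp
    rw [hval] at hlim
    refine hlim.congr' ?_
    filter_upwards [eventually_gt_atTop (0:ℝ)] with s hs
    have hvpos : 0 < v s := by rw [hveq s]; exact hVpos s hs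
    have hxv : eval s (X * V : ℝ[X]) = s * v s := by rw [eval_mul, eval_X, hveq s]
    have hαs : α s = (v s)⁻¹ * eval s R := by
      rw [hα s, ← hkey s hs]; ring
    rw [hxv, hαs]
    field_simp [hvpos.ne', hs.ne']
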